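/- Let $L_1$ be the $k \times k$ lower bidiagonal matrix with $1$ on the diagonal and $-1$ on the subdiagonal (i.e., $(L_1)_{ii}=1$, $(L_1)_{i,i-1}=-1$, all other entries zero), with $k \ge 2$. Then there exists no inner product $\langle\cdot,\cdot\rangle$ on $\mathbb{R}^k$ such that $\langle L_1 v, v\rangle \ge \langle v, v\rangle$ for all $v \in \mathbb{R}^k$. -/

import Mathlib

open Matrix in
/-- The `k × k` lower bidiagonal matrix with `1` on the diagonal and `-1`
on the subdiagonal admits no inner product (given by a positive definite
Grammian matrix `G`) with `⟪L₁ v, v⟫ ≥ ⟪v, v⟫` for all `v`, when `k ≥ 2`. -/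
theorem stmt_0 (k : ℕ) (hk : 2 ≤ k)
    (L1 : Matrix (Fin k) (Fin k) ℝ)
    (hL1 : ∀ i j : Fin k,
      L1 i j = if i = j then 1 else if (j : ℕ) + 1 = (i : ℕ) then -1 else 0) :
    ¬ ∃ G : Matrix (Fin k) (Fin k) ℝ, G.PosDef ∧
        ∀ v : Fin k → ℝ, v ⬝ᵥ G.mulVec v ≤ (L1.mulVec v) ⬝ᵥ G.mulVec v := by
  rintro ⟨G, hG, hle⟩
  have hk2 : k - 2 < k := by omega
  have hk1 : k - 1 < k := by omega
  set a : Fin k := ⟨k - 2, hk2⟩ with ha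
  set b : Fin k := ⟨k - 1, hk1⟩ with hb
  have hab : a ≠ b := by
    intro h
    have := congrArg Fin.val h
    simp only [ha, hb] at this
    omega
  have hGbb : 0 < G b b := by
    have h := hG.dotProduct_mulVec_pos (x := Pi.single b 1) (by
      intro h
      have := congrFun h b
      simp at this)
    simpa [Matrix.mulVec_single, single_dotProduct] using h
  set t : ℝ := (1 - G b a) / (G b b) with ht
  set v : Fin k → ℝ := Pi.single a 1 + Pi.single b t with hv
  have hLv : L1.mulVec v = v - Pi.single b 1 := by
    funext i
    simp only [hv, Matrix.mulVec_add, Matrix.mulVec_single, Pi.add_apply, Pi.sub_apply,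
      Pi.single_apply, hL1]
    have hib' : ((b : ℕ) + 1 = (i : ℕ)) = False := by
      have := i.isLt
      simp only [hb, eq_iff_iff, iff_false]
      omega
    rcases eq_or_ne i a with rfl | hia
    · have h2 : ((a : ℕ) + 1 = (a : ℕ)) = False := by simp
      simp [hab, Ne.symm hab, hib', h2, hL1]
    · rcases eq_or_ne i b with rfl | hib
      · have h1 : ((a : ℕ) + 1 = (b : ℕ)) := by simp only [ha, hb]; omega
        simp [hia, h1, hL1, Ne.symm hia]
        ring
      · have h1 : ((a : ℕ) + 1 = (i : ℕ)) = False := by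
          simp only [eq_iff_iff, iff_false]
          intro h
          exact hib (Fin.ext (by simp only [ha, hb] at h ⊢; omega))
        simp [hia, hib, Ne.symm hia, Ne.symm hib, h1, hib', hL1]
  have key := hle v
  rw [hLv, sub_dotProduct] at key
  have h1 : Pi.single b (1:ℝ) ⬝ᵥ G.mulVec v ≤ 0 := by linarith
  have h2 : Pi.single b (1:ℝ) ⬝ᵥ G.mulVec v = 1 := by
    simp only [hv, Matrix.mulVec_add, Matrix.mulVec_single, single_dotProduct,
      Pi.add_apply, one_mul, Pi.smul_apply, op_smul_eq_mul, Matrix.col_apply]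
    rw [ht]
    field_simp
    ring
  linarith
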